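/- Let F be a homogeneous polynomial of degree 3 over ℂ in x_0, x_1, x_2, x_3, let t ∈ ℂ with t ≠ 0, and let f := x_4^3 − F(x_0,x_1,x_2,x_3) + x_5·(x_0·x_3 − x_1·x_2) + t·x_0·x_5^2. Then there exists a vector w ∈ ℂ^6 with f(w) = 0 and Σ_{j=0}^{5} (∂f/∂x_j)(e_5)·w_j = 0 such that f does not vanish identically on span{e_5, w}. (In other words, the point p_0 = [0:0:0:0:0:1] is not an Eckardt point of the cyclic cubic fourfold Y_{F,t}: the intersection of Y_{F,t} with its tangent hyperplane at p_0 is not a cone with vertex p_0.) -/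
import Mathlib


open MvPolynomial

/-- The cubic form `f = x₄³ − F(x₀,x₁,x₂,x₃) + x₅(x₀x₃ − x₁x₂) + t·x₀x₅²` defining the
cyclic cubic fourfold `Y_{F,t} ⊂ ℙ⁵`. -/
noncomputable def fPoly (F : MvPolynomial (Fin 4) ℂ) (t : ℂ) : MvPolynomial (Fin 6) ℂ :=
  X 4 ^ 3 - rename (Fin.castLE (by norm_num)) F
    + X 5 * (X 0 * X 3 - X 1 * X 2) + C t * X 0 * X 5 ^ 2

/-- The vector `e₅ = (0,0,0,0,0,1)`, representing the point `p₀ = [0:0:0:0:0:1]`. -/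
def e5 : Fin 6 → ℂ := ![0, 0, 0, 0, 0, 1]

lemma eval_zero_pderiv {F : MvPolynomial (Fin 4) ℂ} (hF : F.IsHomogeneous 3) (i : Fin 4) :
    eval (0 : Fin 4 → ℂ) (pderiv i F) = 0 := by
  rw [F.as_sum, map_sum, map_sum]
  refine Finset.sum_eq_zero fun d hd => ?_
  rw [pderiv_monomial, eval_monomial]
  have hdeg : d.degree = 3 := by
    rw [Finsupp.degree_eq_weight_one]; exact hF (mem_support_iff.mp hd)
  have hne : d - Finsupp.single i 1 ≠ 0 := by
    intro h
    have hle : d ≤ Finsupp.single i 1 := tsub_eq_zero_iff_le.mp h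
    have hsub : d.support ⊆ {i} := by
      intro j hj
      have := hle j
      simp only [Finsupp.mem_support_iff] at hj
      by_contra hji
      simp only [Finset.mem_singleton] at hji
      rw [Finsupp.single_apply, if_neg (fun hij => hji hij.symm)] at this
      omega
    have : d.degree ≤ d i := by
      unfold Finsupp.degree
      calc ∑ j ∈ d.support, d j ≤ ∑ j ∈ {i}, d j :=
            Finset.sum_le_sum_of_subset hsub
        _ = d i := Finset.sum_singleton _ _
    have := hle i
    simp [Finsupp.single_apply] at this
    omega
  obtain ⟨j, hj⟩ := Finsupp.ne_iff.mp hne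
  rw [Finsupp.prod]
  rw [Finset.prod_eq_zero (Finsupp.mem_support_iff.mpr (by simpa using hj))]
  · ring
  · exact zero_pow (by simpa using hj)

lemma eval_fPoly (F : MvPolynomial (Fin 4) ℂ) (t : ℂ) (v : Fin 6 → ℂ) :
    eval v (fPoly F t) = v 4 ^ 3 - eval ![v 0, v 1, v 2, v 3] F
      + v 5 * (v 0 * v 3 - v 1 * v 2) + t * v 0 * v 5 ^ 2 := by
  have hcomp : v ∘ Fin.castLE (show (4:ℕ) ≤ 6 by norm_num) = ![v 0, v 1, v 2, v 3] := by
    ext j; fin_cases j <;> rfl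
  simp [fPoly, eval_rename, hcomp]

lemma pderiv_cast (F : MvPolynomial (Fin 4) ℂ) (hF : F.IsHomogeneous 3) (i : Fin 4) :
    eval e5 (pderiv (Fin.castLE (show (4:ℕ) ≤ 6 by norm_num) i)
      (rename (Fin.castLE (show (4:ℕ) ≤ 6 by norm_num)) F)) = 0 := by
  rw [pderiv_rename (Fin.castLE_injective _), eval_rename]
  have hcomp : e5 ∘ Fin.castLE (show (4:ℕ) ≤ 6 by norm_num) = 0 := by
    ext j; fin_cases j <;> rfl
  rw [hcomp, eval_zero_pderiv hF]

/-- For `t ≠ 0`, the point `p₀ = [0:0:0:0:0:1]` is not an Eckardt point of `Y_{F,t}`: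
there is a point `w` of `Y_{F,t}` lying on the tangent hyperplane of `Y_{F,t}` at `p₀`
such that the line joining `p₀` and `w` is not contained in `Y_{F,t}`. -/
theorem stmt14 (F : MvPolynomial (Fin 4) ℂ) (hF : F.IsHomogeneous 3)
    (t : ℂ) (ht : t ≠ 0) :
    ∃ w : Fin 6 → ℂ, eval w (fPoly F t) = 0 ∧
      (∑ j : Fin 6, eval e5 (pderiv j (fPoly F t)) * w j) = 0 ∧
      ¬ ∀ v ∈ Submodule.span ℂ {e5, w}, eval v (fPoly F t) = 0 := by
  classical
  set c : ℂ := eval ![0,1,1,0] F with hc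
  have hw5 : (![0,1,1,0,0,-c] : Fin 6 → ℂ) 5 = -c := rfl
  refine ⟨![0,1,1,0,0,-c], ?_, ?_, ?_⟩
  · rw [eval_fPoly]
    simp [hw5, ← hc]
  · have p1 : eval e5 (pderiv (1 : Fin 6)
        (rename (Fin.castLE (show (4:ℕ) ≤ 6 by norm_num)) F)) = 0 := pderiv_cast F hF 1
    have p2 : eval e5 (pderiv (2 : Fin 6)
        (rename (Fin.castLE (show (4:ℕ) ≤ 6 by norm_num)) F)) = 0 := pderiv_cast F hF 2
    have e1 : eval e5 (pderiv 1 (fPoly F t)) = 0 := by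
      rw [fPoly]; simp [pderiv_mul, p1, show e5 0 = 0 from rfl, show e5 2 = 0 from rfl,
        show e5 5 = 1 from rfl]
    have e2 : eval e5 (pderiv 2 (fPoly F t)) = 0 := by
      rw [fPoly]; simp [pderiv_mul, p2, show e5 0 = 0 from rfl, show e5 1 = 0 from rfl,
        show e5 5 = 1 from rfl]
    have e5' : eval e5 (pderiv 5 (fPoly F t)) = 0 := by
      rw [fPoly]
      have hnv : (5 : Fin 6) ∉ (rename (Fin.castLE (show (4:ℕ) ≤ 6 by norm_num)) F).vars := by
        intro hm
        have := vars_rename _ F hm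
        simp only [Finset.mem_image] at this
        obtain ⟨j, _, hj⟩ := this
        have : ((5:Fin 6) : ℕ) = (j : ℕ) := by rw [← hj]; rfl
        omega
      simp [pderiv_mul, e5, pderiv_eq_zero_of_notMem_vars hnv]
    rw [Fin.sum_univ_six]
    simp [e1, e2, e5']
  · intro h
    have hmem : e5 + ![0,1,1,0,0,-c] ∈ Submodule.span ℂ {e5, ![0,1,1,0,0,-c]} :=
      Submodule.add_mem _ (Submodule.subset_span (by simp))
        (Submodule.subset_span (by simp))
    have := h _ hmem
    rw [eval_fPoly] at this
    simp [e5, hw5, ← hc, show (![0,0,0,0,0,1] : Fin 6 → ℂ) 5 = 1 from rfl] at this
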